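/- Let λ be a partition, and consider reverse plane partitions of shape λ with entries in the totally ordered alphabet x_1 < x_2 < … < y_1 < y_2 < … (every x-letter smaller than every y-letter). For every such filling P, the cells with x-entries form the Young diagram of a subpartition μ ⊆ λ, the x-part is a reverse plane partition of shape μ and the y-part is a reverse plane partition of shape λ/μ; consequently, for every pair of finitely supported sequences (w, v) of nonnegative integers, the number of such two-alphabet reverse plane partitions of shape λ in which w_i columns contain x_i and v_j columns contain y_j equals Σ_{μ ⊆ λ} (number of RPP of shape μ with weight w) · (number of RPP of shape λ/μ with weight v). In other words, g_λ(x, y) = Σ_{μ ⊆ λ} g_μ(x) g_{λ/μ}(y), i.e., Δ(g_λ) = Σ_{μ ⊆ λ} g_μ ⊗ g_{λ/μ}. -/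

import Mathlib

open Finset

namespace Stembridge

/-- The staircase partition `ρ_n = (n, n-1, …, 1)` as a Young diagram
(cells `(i, j)` with `i + j < n`, matrix coordinates, 0-indexed). -/
def staircase (n : ℕ) : YoungDiagram where
  cells := (Finset.range n ×ˢ Finset.range n).filter fun c => c.1 + c.2 < n
  isLowerSet := by
    rintro ⟨i₁, j₁⟩ ⟨i₂, j₂⟩ hle hmem
    obtain ⟨hi, hj⟩ := hle
    simp only [Finset.mem_coe, Finset.mem_filter, Finset.mem_product, Finset.mem_range] at hmem ⊢
    omega

/-- The one-row partition `(k)` as a Young diagram. -/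
def rowShape (k : ℕ) : YoungDiagram where
  cells := ({0} : Finset ℕ) ×ˢ Finset.range k
  isLowerSet := by
    rintro ⟨i₁, j₁⟩ ⟨i₂, j₂⟩ hle hmem
    obtain ⟨hi, hj⟩ := hle
    simp only [Finset.mem_coe, Finset.mem_product, Finset.mem_singleton, Finset.mem_range] at hmem ⊢
    omega

/-- The one-column partition `(1^k)` as a Young diagram. -/
def colShape (k : ℕ) : YoungDiagram where
  cells := Finset.range k ×ˢ ({0} : Finset ℕ)
  isLowerSet := by
    rintro ⟨i₁, j₁⟩ ⟨i₂, j₂⟩ hle hmem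
    obtain ⟨hi, hj⟩ := hle
    simp only [Finset.mem_coe, Finset.mem_product, Finset.mem_singleton, Finset.mem_range] at hmem ⊢
    omega

/-- The cells of the skew diagram `λ/μ`. -/
def skewCells (μ lam : YoungDiagram) : Finset (ℕ × ℕ) := lam.cells \ μ.cells

/-- A reverse plane partition on a finite shape of cells: a filling of the cells with
positive integers which weakly increases along rows (left to right) and down columns.
Entries outside the shape are `0`. -/
structure RPP (shape : Finset (ℕ × ℕ)) where
  entry : ℕ × ℕ → ℕ
  pos : ∀ c ∈ shape, 0 < entry c
  zero_off : ∀ c, c ∉ shape → entry c = 0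
  row_le : ∀ i j, (i, j) ∈ shape → (i, j + 1) ∈ shape → entry (i, j) ≤ entry (i, j + 1)
  col_le : ∀ i j, (i, j) ∈ shape → (i + 1, j) ∈ shape → entry (i, j) ≤ entry (i + 1, j)

/-- The weight of a reverse plane partition: `weight P i` is the number of columns of the
shape containing an entry equal to `i`. -/
def RPP.weight {shape : Finset (ℕ × ℕ)} (P : RPP shape) (i : ℕ) : ℕ :=
  ((shape.filter fun c => P.entry c = i).image Prod.snd).card

/-- A set-valued tableau on a finite shape of cells: a filling of the cells by finite
nonempty sets of positive integers such that `max(left) ≤ min(right)` for horizontally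
adjacent cells and `max(upper) < min(lower)` for vertically adjacent cells.
Cells outside the shape carry `∅`. -/
structure SVT (shape : Finset (ℕ × ℕ)) where
  entry : ℕ × ℕ → Finset ℕ
  nonempty : ∀ c ∈ shape, (entry c).Nonempty
  pos : ∀ c ∈ shape, ∀ x ∈ entry c, 0 < x
  empty_off : ∀ c, c ∉ shape → entry c = ∅
  row_le : ∀ i j, (i, j) ∈ shape → (i, j + 1) ∈ shape →
    ∀ a ∈ entry (i, j), ∀ b ∈ entry (i, j + 1), a ≤ b
  col_lt : ∀ i j, (i, j) ∈ shape → (i + 1, j) ∈ shape →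
    ∀ a ∈ entry (i, j), ∀ b ∈ entry (i + 1, j), a < b

/-- The content of a set-valued tableau: `content T i` is the number of cells whose
set contains `i`. -/
def SVT.content {shape : Finset (ℕ × ℕ)} (T : SVT shape) (i : ℕ) : ℕ :=
  (shape.filter fun c => i ∈ T.entry c).card

/-- The reverse reading word of a set-valued tableau: read the columns from rightmost to
leftmost, each column from top to bottom, the elements within a cell in decreasing order. -/
def SVT.word {shape : Finset (ℕ × ℕ)} (T : SVT shape) : List ℕ :=
  ((List.range (shape.sup Prod.snd + 1)).reverse).flatMap fun j =>
    (List.range (shape.sup Prod.fst + 1)).flatMap fun i =>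
      ((T.entry (i, j)).sort (· ≤ ·)).reverse

/-- A word is a lattice word if in every prefix, for every `a ≥ 1`, the number of
occurrences of `a+1` is at most the number of occurrences of `a` (equivalently, the `i`-th
occurrence of `a+1` comes after the `i`-th occurrence of `a`). -/
def IsLatticeWord (w : List ℕ) : Prop :=
  ∀ t a, 1 ≤ a → (w.take t).count (a + 1) ≤ (w.take t).count a

/-- The content of the staircase partition `ρ_n` as a function: `a ↦ n + 1 - a`
(so `a ↦ 0` for `a > n`), for `a ≥ 1`. -/
def staircaseContent (n : ℕ) : ℕ → ℕ := fun a => n + 1 - a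

/-- A semistandard Young tableau on a finite shape of cells: a filling with positive
integers weakly increasing along rows and strictly increasing down columns.
Entries outside the shape are `0`. -/
structure SSYT (shape : Finset (ℕ × ℕ)) where
  entry : ℕ × ℕ → ℕ
  pos : ∀ c ∈ shape, 0 < entry c
  zero_off : ∀ c, c ∉ shape → entry c = 0
  row_le : ∀ i j, (i, j) ∈ shape → (i, j + 1) ∈ shape → entry (i, j) ≤ entry (i, j + 1)
  col_lt : ∀ i j, (i, j) ∈ shape → (i + 1, j) ∈ shape → entry (i, j) < entry (i + 1, j)

/-- The type of a semistandard Young tableau: `type T i` is the number of entries equal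
to `i`. -/
def SSYT.type {shape : Finset (ℕ × ℕ)} (T : SSYT shape) (i : ℕ) : ℕ :=
  (shape.filter fun c => T.entry c = i).card

/-- The cells of the skew shape `ν∗μ`: `μ` occupies the lower-left block and `ν` the
upper-right block, the top-right corner of `μ` touching the bottom-left corner of `ν`. -/
def starCells (ν μ : YoungDiagram) : Finset (ℕ × ℕ) :=
  ν.cells.image (fun c => (c.1, c.2 + μ.rowLen 0)) ∪
    μ.cells.image (fun c => (c.1 + ν.colLen 0, c.2))

/-- The number of reverse plane partitions of shape `λ/μ` with weight `w` (with the
convention that this is `0` if `μ ⊄ λ`). -/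
noncomputable def rppCount (lam μ : YoungDiagram) (w : ℕ →₀ ℕ) : ℕ :=
  if μ.cells ⊆ lam.cells then
    Nat.card {P : RPP (skewCells μ lam) // ∀ i, 1 ≤ i → P.weight i = w i}
  else 0

/-- The number of set-valued tableaux of shape `λ/μ` with content `m` (with the
convention that this is `0` if `μ ⊄ λ`). -/
noncomputable def svtCount (lam μ : YoungDiagram) (m : ℕ →₀ ℕ) : ℕ :=
  if μ.cells ⊆ lam.cells then
    Nat.card {T : SVT (skewCells μ lam) // ∀ i, 1 ≤ i → T.content i = m i}
  else 0

/-- The number of semistandard Young tableaux of shape `λ/μ` of type `α` (with the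
convention that this is `0` if `μ ⊄ λ`). -/
noncomputable def ssytCount (lam μ : YoungDiagram) (α : ℕ →₀ ℕ) : ℕ :=
  if μ.cells ⊆ lam.cells then
    Nat.card {T : SSYT (skewCells μ lam) // ∀ i, 1 ≤ i → T.type i = α i}
  else 0

/-- The number of set-valued tableaux of a given shape whose reverse reading word is a
lattice word with content `c` (indexed from 1). -/
noncomputable def latticeCount (shape : Finset (ℕ × ℕ)) (c : ℕ → ℕ) : ℕ :=
  Nat.card {T : SVT shape // IsLatticeWord T.word ∧ ∀ a, 1 ≤ a → T.word.count a = c a}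

open scoped Classical

/-- A reverse plane partition of a shape with entries in the two-alphabet totally ordered
set `x_1 < x_2 < ⋯ < y_1 < y_2 < ⋯`, encoded as `ℕ ⊕ₗ ℕ` with `x_i = inl i` and
`y_j = inr j` (indices `≥ 1`); entries weakly increase along rows and down columns.
Cells outside the shape carry the junk value `inl 0`. -/
structure RPP2 (shape : Finset (ℕ × ℕ)) where
  entry : ℕ × ℕ → ℕ ⊕ₗ ℕ
  valid : ∀ c ∈ shape, (ofLex (entry c)).elim (fun i => 1 ≤ i) fun j => 1 ≤ j
  junk_off : ∀ c, c ∉ shape → entry c = Sum.inlₗ 0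
  row_le : ∀ i j, (i, j) ∈ shape → (i, j + 1) ∈ shape → entry (i, j) ≤ entry (i, j + 1)
  col_le : ∀ i j, (i, j) ∈ shape → (i + 1, j) ∈ shape → entry (i, j) ≤ entry (i + 1, j)

/-- The `x`-weight of a two-alphabet reverse plane partition: the number of columns
containing the letter `x_i`. -/
def RPP2.xweight {shape : Finset (ℕ × ℕ)} (P : RPP2 shape) (i : ℕ) : ℕ :=
  ((shape.filter fun c => P.entry c = Sum.inlₗ i).image Prod.snd).card

/-- The `y`-weight of a two-alphabet reverse plane partition: the number of columns
containing the letter `y_j`. -/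
def RPP2.yweight {shape : Finset (ℕ × ℕ)} (P : RPP2 shape) (j : ℕ) : ℕ :=
  ((shape.filter fun c => P.entry c = Sum.inrₗ j).image Prod.snd).card

section AuxSplit

theorem RPP.ext' {shape : Finset (ℕ × ℕ)} {P Q : RPP shape} (h : P.entry = Q.entry) : P = Q := by
  cases P; cases Q; simp_all

theorem RPP2.ext' {shape : Finset (ℕ × ℕ)} {P Q : RPP2 shape} (h : P.entry = Q.entry) : P = Q := by
  cases P; cases Q; simp_all

variable {lam : YoungDiagram}

theorem RPP2.entry_row_mono (P : RPP2 lam.cells) (i j : ℕ) :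
    ∀ d, (i, j + d) ∈ lam.cells → P.entry (i, j) ≤ P.entry (i, j + d)
  | 0, _ => le_refl _
  | d + 1, h => by
    have h' : (i, j + d) ∈ lam.cells := lam.up_left_mem le_rfl (by omega) h
    exact le_trans (P.entry_row_mono i j d h') (P.row_le i (j + d) h' h)

theorem RPP2.entry_col_mono (P : RPP2 lam.cells) (i j : ℕ) :
    ∀ d, (i + d, j) ∈ lam.cells → P.entry (i, j) ≤ P.entry (i + d, j)
  | 0, _ => le_refl _
  | d + 1, h => by
    have h' : (i + d, j) ∈ lam.cells := lam.up_left_mem (by omega) le_rfl h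
    exact le_trans (P.entry_col_mono i j d h') (P.col_le (i + d) j h' h)

theorem RPP2.entry_mono (P : RPP2 lam.cells) {i j i' j' : ℕ} (hi : i ≤ i') (hj : j ≤ j')
    (hmem : (i', j') ∈ lam.cells) : P.entry (i, j) ≤ P.entry (i', j') := by
  have h1 : (i, j') ∈ lam.cells := lam.up_left_mem hi le_rfl hmem
  obtain ⟨d, rfl⟩ := Nat.exists_eq_add_of_le hj
  obtain ⟨e, rfl⟩ := Nat.exists_eq_add_of_le hi
  exact le_trans (P.entry_row_mono i j d h1) (P.entry_col_mono i (j + d) e hmem)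

theorem isLeft_of_le_inl {x : ℕ ⊕ₗ ℕ} {a : ℕ} (h : x ≤ Sum.inlₗ a) : (ofLex x).isLeft := by
  rcases hx : ofLex x with b | b
  · simp
  · exfalso
    have hx' : x = Sum.inrₗ b := by
      have : toLex (ofLex x) = toLex (Sum.inr b) := congrArg toLex hx
      simpa using this
    rw [hx'] at h
    exact Sum.Lex.not_inr_le_inl h

theorem lowerset_isLeft (P : RPP2 lam.cells) :
    IsLowerSet {c : ℕ × ℕ | c ∈ lam.cells ∧ (ofLex (P.entry c)).isLeft = true} := by
  rintro ⟨i2, j2⟩ ⟨i1, j1⟩ ⟨hi, hj⟩ ⟨hmem, hl⟩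
  refine ⟨lam.up_left_mem hi hj hmem, ?_⟩
  obtain ⟨a, ha⟩ := Sum.isLeft_iff.mp hl
  have he : P.entry (i2, j2) = Sum.inlₗ a := by
    have : toLex (ofLex (P.entry (i2, j2))) = toLex (Sum.inl a) := congrArg toLex ha
    simpa using this
  exact isLeft_of_le_inl (he ▸ P.entry_mono hi hj hmem)

/-- The set of cells carrying `x`-letters. -/
def sfun (lam : YoungDiagram) (P : RPP2 lam.cells) : Finset (ℕ × ℕ) :=
  lam.cells.filter fun c => (ofLex (P.entry c)).isLeft

theorem mem_sfun {P : RPP2 lam.cells} {c : ℕ × ℕ} :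
    c ∈ sfun lam P ↔ c ∈ lam.cells ∧ (ofLex (P.entry c)).isLeft := by
  simp [sfun]

theorem sfun_subset (P : RPP2 lam.cells) : sfun lam P ⊆ lam.cells := filter_subset _ _

theorem sfun_isLowerSet (P : RPP2 lam.cells) : IsLowerSet (↑(sfun lam P) : Set (ℕ × ℕ)) := by
  have : (↑(sfun lam P) : Set (ℕ × ℕ)) =
      {c : ℕ × ℕ | c ∈ lam.cells ∧ (ofLex (P.entry c)).isLeft = true} := by
    ext c; simp [mem_sfun]
  rw [this]
  exact lowerset_isLeft P

def xval : ℕ ⊕ₗ ℕ → ℕ := fun e => (ofLex e).elim id fun _ => 0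
def yval : ℕ ⊕ₗ ℕ → ℕ := fun e => (ofLex e).elim (fun _ => 0) id

theorem entry_eq_inl {P : RPP2 lam.cells} {c : ℕ × ℕ} (hc : c ∈ sfun lam P) :
    P.entry c = Sum.inlₗ (xval (P.entry c)) := by
  obtain ⟨a, ha⟩ := Sum.isLeft_iff.mp (mem_sfun.mp hc).2
  have he : P.entry c = Sum.inlₗ a := by
    have : toLex (ofLex (P.entry c)) = toLex (Sum.inl a) := congrArg toLex ha
    simpa using this
  rw [he]; rfl

theorem entry_eq_inr {P : RPP2 lam.cells} {c : ℕ × ℕ} (hc : c ∈ lam.cells \ sfun lam P) :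
    P.entry c = Sum.inrₗ (yval (P.entry c)) := by
  rw [mem_sdiff] at hc
  have hr : (ofLex (P.entry c)).isRight := by
    have := hc.2
    rw [mem_sfun] at this
    push_neg at this
    simpa [Sum.not_isLeft] using this hc.1
  obtain ⟨b, hb⟩ := Sum.isRight_iff.mp hr
  have he : P.entry c = Sum.inrₗ b := by
    have : toLex (ofLex (P.entry c)) = toLex (Sum.inr b) := congrArg toLex hb
    simpa using this
  rw [he]; rfl


def splitA (P : RPP2 lam.cells) (s : Finset (ℕ × ℕ)) (h : s = sfun lam P) : RPP s where
  entry c := if c ∈ s then xval (P.entry c) else 0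
  pos c hc := by
    simp only [if_pos hc]
    subst h
    have he := entry_eq_inl hc
    have hv := P.valid c (mem_sfun.mp hc).1
    rw [he] at hv
    exact hv
  zero_off c hc := if_neg hc
  row_le i j h1 h2 := by
    simp only [if_pos h1, if_pos h2]
    subst h
    have hle := P.row_le i j (sfun_subset P h1) (sfun_subset P h2)
    rw [entry_eq_inl h1, entry_eq_inl h2] at hle
    exact Sum.Lex.inl_le_inl_iff.mp hle
  col_le i j h1 h2 := by
    simp only [if_pos h1, if_pos h2]
    subst h
    have hle := P.col_le i j (sfun_subset P h1) (sfun_subset P h2)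
    rw [entry_eq_inl h1, entry_eq_inl h2] at hle
    exact Sum.Lex.inl_le_inl_iff.mp hle

def splitB (P : RPP2 lam.cells) (s : Finset (ℕ × ℕ)) (h : s = sfun lam P) :
    RPP (lam.cells \ s) where
  entry c := if c ∈ lam.cells \ s then yval (P.entry c) else 0
  pos c hc := by
    simp only [if_pos hc]
    subst h
    have he := entry_eq_inr hc
    have hv := P.valid c (mem_sdiff.mp hc).1
    rw [he] at hv
    exact hv
  zero_off c hc := if_neg hc
  row_le i j h1 h2 := by
    simp only [if_pos h1, if_pos h2]
    subst h
    have hle := P.row_le i j (mem_sdiff.mp h1).1 (mem_sdiff.mp h2).1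
    rw [entry_eq_inr h1, entry_eq_inr h2] at hle
    exact Sum.Lex.inr_le_inr_iff.mp hle
  col_le i j h1 h2 := by
    simp only [if_pos h1, if_pos h2]
    subst h
    have hle := P.col_le i j (mem_sdiff.mp h1).1 (mem_sdiff.mp h2).1
    rw [entry_eq_inr h1, entry_eq_inr h2] at hle
    exact Sum.Lex.inr_le_inr_iff.mp hle

theorem splitA_weight (P : RPP2 lam.cells) (s : Finset (ℕ × ℕ)) (h : s = sfun lam P) (i : ℕ)
    (_hi : 1 ≤ i) : (splitA P s h).weight i = P.xweight i := by
  subst h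
  unfold RPP.weight RPP2.xweight
  congr 1
  congr 1
  ext c
  rw [mem_filter, mem_filter]
  simp only [splitA]
  constructor
  · rintro ⟨hc, he⟩
    rw [if_pos hc] at he
    refine ⟨(mem_sfun.mp hc).1, ?_⟩
    rw [entry_eq_inl hc, he]
  · rintro ⟨hc, he⟩
    have hmem : c ∈ sfun lam P := mem_sfun.mpr ⟨hc, by rw [he]; rfl⟩
    refine ⟨hmem, ?_⟩
    rw [if_pos hmem, he]
    rfl

theorem splitB_weight (P : RPP2 lam.cells) (s : Finset (ℕ × ℕ)) (h : s = sfun lam P) (j : ℕ)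
    (_hj : 1 ≤ j) : (splitB P s h).weight j = P.yweight j := by
  subst h
  unfold RPP.weight RPP2.yweight
  congr 1
  congr 1
  ext c
  rw [mem_filter, mem_filter]
  simp only [splitB]
  constructor
  · rintro ⟨hc, he⟩
    rw [if_pos hc] at he
    refine ⟨(mem_sdiff.mp hc).1, ?_⟩
    rw [entry_eq_inr hc, he]
  · rintro ⟨hc, he⟩
    have hns : c ∉ sfun lam P := by
      rw [mem_sfun]
      rintro ⟨-, hl⟩
      rw [he] at hl
      simp [Sum.inrₗ] at hl
    have hmem : c ∈ lam.cells \ sfun lam P := mem_sdiff.mpr ⟨hc, hns⟩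
    refine ⟨hmem, ?_⟩
    rw [if_pos hmem, he]
    rfl


def combine (s : Finset (ℕ × ℕ)) (hs : s ⊆ lam.cells) (hls : IsLowerSet (s : Set (ℕ × ℕ)))
    (A : RPP s) (B : RPP (lam.cells \ s)) : RPP2 lam.cells where
  entry c := if c ∈ s then Sum.inlₗ (A.entry c) else
    if c ∈ lam.cells then Sum.inrₗ (B.entry c) else Sum.inlₗ 0
  valid c hc := by
    by_cases h : c ∈ s
    · simp only [if_pos h]
      exact A.pos c h
    · simp only [if_neg h, if_pos hc]
      exact B.pos c (mem_sdiff.mpr ⟨hc, h⟩)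
  junk_off c hc := by
    simp only [if_neg (fun h => hc (hs h)), if_neg hc]
  row_le i j h1 h2 := by
    by_cases k1 : (i, j) ∈ s <;> by_cases k2 : (i, j + 1) ∈ s
    · simp only [if_pos k1, if_pos k2]
      exact Sum.Lex.inl_le_inl_iff.mpr (A.row_le i j k1 k2)
    · simp only [if_pos k1, if_neg k2, if_pos h2]
      exact Sum.Lex.inl_le_inr _ _
    · exact absurd (hls (Prod.mk_le_mk.mpr ⟨le_rfl, by omega⟩) k2) k1
    · simp only [if_neg k1, if_pos h1, if_neg k2, if_pos h2]
      exact Sum.Lex.inr_le_inr_iff.mpr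
        (B.row_le i j (mem_sdiff.mpr ⟨h1, k1⟩) (mem_sdiff.mpr ⟨h2, k2⟩))
  col_le i j h1 h2 := by
    by_cases k1 : (i, j) ∈ s <;> by_cases k2 : (i + 1, j) ∈ s
    · simp only [if_pos k1, if_pos k2]
      exact Sum.Lex.inl_le_inl_iff.mpr (A.col_le i j k1 k2)
    · simp only [if_pos k1, if_neg k2, if_pos h2]
      exact Sum.Lex.inl_le_inr _ _
    · exact absurd (hls (Prod.mk_le_mk.mpr ⟨by omega, le_rfl⟩) k2) k1
    · simp only [if_neg k1, if_pos h1, if_neg k2, if_pos h2]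
      exact Sum.Lex.inr_le_inr_iff.mpr
        (B.col_le i j (mem_sdiff.mpr ⟨h1, k1⟩) (mem_sdiff.mpr ⟨h2, k2⟩))

theorem combine_xweight (s : Finset (ℕ × ℕ)) (hs : s ⊆ lam.cells)
    (hls : IsLowerSet (s : Set (ℕ × ℕ))) (A : RPP s) (B : RPP (lam.cells \ s)) (i : ℕ)
    (hi : 1 ≤ i) : (combine s hs hls A B).xweight i = A.weight i := by
  unfold RPP.weight RPP2.xweight
  congr 1
  congr 1
  ext c
  rw [mem_filter, mem_filter]
  simp only [combine]
  constructor
  · rintro ⟨hc, he⟩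
    by_cases h : c ∈ s
    · rw [if_pos h] at he
      refine ⟨h, ?_⟩
      have := congrArg ofLex he
      simpa using this
    · rw [if_neg h, if_pos hc] at he
      exact absurd (congrArg (fun x => (ofLex x).isLeft) he) (by simp)
  · rintro ⟨hc, he⟩
    exact ⟨hs hc, by rw [if_pos hc, he]⟩

theorem combine_yweight (s : Finset (ℕ × ℕ)) (hs : s ⊆ lam.cells)
    (hls : IsLowerSet (s : Set (ℕ × ℕ))) (A : RPP s) (B : RPP (lam.cells \ s)) (j : ℕ)
    (hj : 1 ≤ j) : (combine s hs hls A B).yweight j = B.weight j := by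
  unfold RPP.weight RPP2.yweight
  congr 1
  congr 1
  ext c
  rw [mem_filter, mem_filter]
  simp only [combine]
  constructor
  · rintro ⟨hc, he⟩
    by_cases h : c ∈ s
    · rw [if_pos h] at he
      exact absurd (congrArg (fun x => (ofLex x).isLeft) he) (by simp)
    · rw [if_neg h, if_pos hc] at he
      have := congrArg ofLex he
      refine ⟨mem_sdiff.mpr ⟨hc, h⟩, by simpa using this⟩
  · rintro ⟨hc, he⟩
    obtain ⟨hc1, hc2⟩ := mem_sdiff.mp hc
    exact ⟨hc1, by rw [if_neg hc2, if_pos hc1, he]⟩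

theorem sfun_combine (s : Finset (ℕ × ℕ)) (hs : s ⊆ lam.cells)
    (hls : IsLowerSet (s : Set (ℕ × ℕ))) (A : RPP s) (B : RPP (lam.cells \ s)) :
    sfun lam (combine s hs hls A B) = s := by
  ext c
  rw [mem_sfun]
  constructor
  · rintro ⟨hc, hl⟩
    by_cases h : c ∈ s
    · exact h
    · exfalso
      simp only [combine, if_neg h, if_pos hc] at hl
      simp at hl
  · intro h
    refine ⟨hs h, ?_⟩
    simp only [combine, if_pos h]
    simp

theorem combine_split (P : RPP2 lam.cells) (s : Finset (ℕ × ℕ)) (h : s = sfun lam P)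
    (hs : s ⊆ lam.cells) (hls : IsLowerSet (s : Set (ℕ × ℕ))) :
    combine s hs hls (splitA P s h) (splitB P s h) = P := by
  apply RPP2.ext'
  funext c
  subst h
  show (if c ∈ sfun lam P then Sum.inlₗ (if c ∈ sfun lam P then xval (P.entry c) else 0)
    else if c ∈ lam.cells then
      Sum.inrₗ (if c ∈ lam.cells \ sfun lam P then yval (P.entry c) else 0)
    else Sum.inlₗ 0) = P.entry c
  by_cases h1 : c ∈ sfun lam P
  · rw [if_pos h1, if_pos h1]
    exact (entry_eq_inl h1).symm
  · by_cases h2 : c ∈ lam.cells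
    · have hd : c ∈ lam.cells \ sfun lam P := mem_sdiff.mpr ⟨h2, h1⟩
      rw [if_neg h1, if_pos h2, if_pos hd]
      exact (entry_eq_inr hd).symm
    · rw [if_neg h1, if_neg h2]
      exact (P.junk_off c h2).symm

theorem splitA_combine (s : Finset (ℕ × ℕ)) (hs : s ⊆ lam.cells)
    (hls : IsLowerSet (s : Set (ℕ × ℕ))) (A : RPP s) (B : RPP (lam.cells \ s))
    (h : s = sfun lam (combine s hs hls A B)) :
    splitA (combine s hs hls A B) s h = A := by
  apply RPP.ext'
  funext c
  show (if c ∈ s then xval ((combine s hs hls A B).entry c) else 0) = A.entry c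
  by_cases h1 : c ∈ s
  · rw [if_pos h1]
    show xval (if c ∈ s then Sum.inlₗ (A.entry c) else _) = A.entry c
    rw [if_pos h1]
    rfl
  · rw [if_neg h1]
    exact (A.zero_off c h1).symm

theorem splitB_combine (s : Finset (ℕ × ℕ)) (hs : s ⊆ lam.cells)
    (hls : IsLowerSet (s : Set (ℕ × ℕ))) (A : RPP s) (B : RPP (lam.cells \ s))
    (h : s = sfun lam (combine s hs hls A B)) :
    splitB (combine s hs hls A B) s h = B := by
  apply RPP.ext'
  funext c
  show (if c ∈ lam.cells \ s then yval ((combine s hs hls A B).entry c) else 0) = B.entry c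
  by_cases h1 : c ∈ lam.cells \ s
  · obtain ⟨hc1, hc2⟩ := mem_sdiff.mp h1
    rw [if_pos h1]
    show yval (if c ∈ s then _ else if c ∈ lam.cells then Sum.inrₗ (B.entry c) else _) = B.entry c
    rw [if_neg hc2, if_pos hc1]
    rfl
  · rw [if_neg h1]
    exact (B.zero_off c h1).symm


theorem nat_card_sigma' {ι : Type} [Fintype ι] (β : ι → Type) [∀ i, Finite (β i)] :
    Nat.card (Sigma β) = ∑ i, Nat.card (β i) := by
  letI : ∀ i, Fintype (β i) := fun i => Fintype.ofFinite _
  simp [Nat.card_eq_fintype_card, Fintype.card_sigma]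

theorem finite_subtype (lam : YoungDiagram) (w v : ℕ →₀ ℕ) :
    Finite {P : RPP2 lam.cells //
      (∀ i, 1 ≤ i → P.xweight i = w i) ∧ ∀ j, 1 ≤ j → P.yweight j = v j} := by
  classical
  set S : Finset (ℕ ⊕ₗ ℕ) := w.support.image Sum.inlₗ ∪ v.support.image Sum.inrₗ with hS
  set T := {P : RPP2 lam.cells //
      (∀ i, 1 ≤ i → P.xweight i = w i) ∧ ∀ j, 1 ≤ j → P.yweight j = v j} with hT
  have key : ∀ P : T, ∀ c, (hc : c ∈ lam.cells) → P.1.entry c ∈ S := by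
    rintro ⟨P, hPw, hPv⟩ c hc
    rcases ha : ofLex (P.entry c) with a | a
    · have he : P.entry c = Sum.inlₗ a := by
        have := congrArg toLex ha; simpa using this
      have hv := P.valid c hc
      rw [he] at hv
      have hcard : P.xweight a ≠ 0 := by
        unfold RPP2.xweight
        apply Finset.card_ne_zero_of_mem
        exact Finset.mem_image_of_mem Prod.snd (mem_filter.mpr ⟨hc, he⟩)
      have hw : w a ≠ 0 := by rw [← hPw a hv]; exact hcard
      rw [he, hS]
      exact Finset.mem_union_left _ (Finset.mem_image_of_mem _ (Finsupp.mem_support_iff.mpr hw))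
    · have he : P.entry c = Sum.inrₗ a := by
        have := congrArg toLex ha; simpa using this
      have hv := P.valid c hc
      rw [he] at hv
      have hcard : P.yweight a ≠ 0 := by
        unfold RPP2.yweight
        apply Finset.card_ne_zero_of_mem
        exact Finset.mem_image_of_mem Prod.snd (mem_filter.mpr ⟨hc, he⟩)
      have hw : v a ≠ 0 := by rw [← hPv a hv]; exact hcard
      rw [he, hS]
      exact Finset.mem_union_right _ (Finset.mem_image_of_mem _ (Finsupp.mem_support_iff.mpr hw))
  apply Finite.of_injective (f := fun P : T => fun c : ↥lam.cells => (⟨P.1.entry c, key P c c.2⟩ : ↥S))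
  intro P Q h
  apply Subtype.ext
  apply RPP2.ext'
  funext c
  by_cases hc : c ∈ lam.cells
  · have := congrFun h ⟨c, hc⟩
    exact Subtype.ext_iff.mp this
  · rw [P.1.junk_off c hc, Q.1.junk_off c hc]

theorem card_eq (lam : YoungDiagram) (w v : ℕ →₀ ℕ) :
    Nat.card {P : RPP2 lam.cells //
        (∀ i, 1 ≤ i → P.xweight i = w i) ∧ ∀ j, 1 ≤ j → P.yweight j = v j} =
      ∑ s ∈ lam.cells.powerset.filter (fun s : Finset (ℕ × ℕ) => IsLowerSet (s : Set (ℕ × ℕ))),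
        Nat.card {P : RPP s // ∀ i, 1 ≤ i → P.weight i = w i} *
          Nat.card {P : RPP (lam.cells \ s) // ∀ j, 1 ≤ j → P.weight j = v j} := by
  classical
  set F := lam.cells.powerset.filter
    (fun s : Finset (ℕ × ℕ) => IsLowerSet (s : Set (ℕ × ℕ))) with hF
  set T := {P : RPP2 lam.cells //
      (∀ i, 1 ≤ i → P.xweight i = w i) ∧ ∀ j, 1 ≤ j → P.yweight j = v j} with hT
  haveI : Finite T := finite_subtype lam w v
  have hmemF : ∀ P : RPP2 lam.cells, sfun lam P ∈ F := fun P =>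
    mem_filter.mpr ⟨mem_powerset.mpr (sfun_subset P), sfun_isLowerSet P⟩
  set f : T → ↥F := fun P => ⟨sfun lam P.1, hmemF P.1⟩ with hf
  have e1 : Nat.card T = Nat.card (Σ b : ↥F, {P : T // f P = b}) :=
    (Nat.card_congr (Equiv.sigmaFiberEquiv f)).symm
  rw [e1, nat_card_sigma']
  rw [← Finset.sum_coe_sort F (fun s => Nat.card {P : RPP s // ∀ i, 1 ≤ i → P.weight i = w i} *
      Nat.card {P : RPP (lam.cells \ s) // ∀ j, 1 ≤ j → P.weight j = v j})]
  apply Finset.sum_congr rfl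
  intro b _
  have hb := mem_filter.mp b.2
  have hs : (b : Finset (ℕ × ℕ)) ⊆ lam.cells := mem_powerset.mp hb.1
  have hls : IsLowerSet ((b : Finset (ℕ × ℕ)) : Set (ℕ × ℕ)) := hb.2
  rw [← Nat.card_prod]
  apply Nat.card_congr
  refine
    { toFun := fun P =>
        (⟨splitA P.1.1 b ((congrArg Subtype.val P.2).symm),
          fun i hi => (splitA_weight _ _ _ i hi).trans (P.1.2.1 i hi)⟩,
         ⟨splitB P.1.1 b ((congrArg Subtype.val P.2).symm),
          fun j hj => (splitB_weight _ _ _ j hj).trans (P.1.2.2 j hj)⟩)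
      invFun := fun AB =>
        ⟨⟨combine b hs hls AB.1.1 AB.2.1,
          fun i hi => (combine_xweight _ hs hls _ _ i hi).trans (AB.1.2 i hi),
          fun j hj => (combine_yweight _ hs hls _ _ j hj).trans (AB.2.2 j hj)⟩,
          Subtype.ext (sfun_combine _ hs hls _ _)⟩
      left_inv := fun P =>
        Subtype.ext (Subtype.ext
          (combine_split P.1.1 b ((congrArg Subtype.val P.2).symm) hs hls))
      right_inv := fun AB =>
        Prod.ext
          (Subtype.ext (splitA_combine b hs hls AB.1.1 AB.2.1
            ((sfun_combine _ hs hls _ _).symm)))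
          (Subtype.ext (splitB_combine b hs hls AB.1.1 AB.2.1
            ((sfun_combine _ hs hls _ _).symm))) }


end AuxSplit

/-- `Δ(g_λ) = Σ_{μ ⊆ λ} g_μ ⊗ g_{λ/μ}`: in any reverse plane partition of shape `λ` over
the two-alphabet `x_1 < x_2 < ⋯ < y_1 < y_2 < ⋯`, the cells carrying `x`-letters form the
Young diagram of a subpartition `μ ⊆ λ` (a lower set of cells); consequently, for all
finitely supported sequences `w, v`, the number of such two-alphabet reverse plane
partitions of shape `λ` in which `w i` columns contain `x_i` and `v j` columns contain
`y_j` equals `Σ_{μ ⊆ λ}` (#RPP of shape `μ` with weight `w`) · (#RPP of shape `λ/μ` with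
weight `v`), the sum running over the lower subsets `s ⊆ λ.cells`. -/
theorem comul_dual_grothendieck (lam : YoungDiagram) (w v : ℕ →₀ ℕ) :
    (∀ P : RPP2 lam.cells,
      IsLowerSet {c : ℕ × ℕ | c ∈ lam.cells ∧ (ofLex (P.entry c)).isLeft = true}) ∧
    Nat.card {P : RPP2 lam.cells //
        (∀ i, 1 ≤ i → P.xweight i = w i) ∧ ∀ j, 1 ≤ j → P.yweight j = v j} =
      ∑ s ∈ lam.cells.powerset.filter (fun s : Finset (ℕ × ℕ) => IsLowerSet (s : Set (ℕ × ℕ))),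
        Nat.card {P : RPP s // ∀ i, 1 ≤ i → P.weight i = w i} *
          Nat.card {P : RPP (lam.cells \ s) // ∀ j, 1 ≤ j → P.weight j = v j} :=
  ⟨fun P => lowerset_isLeft P, card_eq lam w v⟩

end Stembridge
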